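/- Let n ≥ 2 and let Ẑ be the n×n matrix with top-left entry 1, first-row and first-column off-corner entries all equal to 1/n, and lower-right (n−1)×(n−1) block equal to (1/n)·I_{n−1}. Let W be the (n+1)×n matrix whose first column is the first standard basis vector e₀ ∈ ℝ^{n+1} and whose column k+1 (for k = 1, …, n−1) is the vector (0, 1, −e_kᵀ)ᵀ ∈ ℝ^{n+1} with e_k the k-th standard basis vector of ℝ^{n−1}. Then Ẑ is positive definite, and Ŷ := W Ẑ Wᵀ satisfies Ŷ₀₀ = 1, diag(Ŷ) ≥ Ŷ e₀, diag(Ŷ) ≥ −Ŷ e₀, and diag(Ŷ) ≤ 𝟙 componentwise, where Ŷ e₀ is the first column of Ŷ. -/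

import Mathlib

open Matrix

theorem stmt_15 (m : ℕ) (hm : 1 ≤ m)
    (Z : Matrix (Fin 1 ⊕ Fin m) (Fin 1 ⊕ Fin m) ℝ)
    (hZ : Z = Matrix.fromBlocks (Matrix.of fun _ _ => (1 : ℝ))
      (Matrix.of fun _ _ => 1 / (m + 1 : ℝ))
      (Matrix.of fun _ _ => 1 / (m + 1 : ℝ))
      ((1 / (m + 1 : ℝ)) • 1))
    (W : Matrix (Fin 1 ⊕ (Fin 1 ⊕ Fin m)) (Fin 1 ⊕ Fin m) ℝ)
    (hW : W = Matrix.of fun i k =>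
      match i, k with
      | Sum.inl _, Sum.inl _ => (1 : ℝ)
      | Sum.inl _, Sum.inr _ => 0
      | Sum.inr (Sum.inl _), Sum.inl _ => 0
      | Sum.inr (Sum.inl _), Sum.inr _ => 1
      | Sum.inr (Sum.inr _), Sum.inl _ => 0
      | Sum.inr (Sum.inr j), Sum.inr k => if j = k then -1 else 0)
    (Y : Matrix (Fin 1 ⊕ (Fin 1 ⊕ Fin m)) (Fin 1 ⊕ (Fin 1 ⊕ Fin m)) ℝ)
    (hY : Y = W * Z * Wᵀ) :
    Z.PosDef ∧
    Y (Sum.inl 0) (Sum.inl 0) = 1 ∧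
    (∀ i, Y i (Sum.inl 0) ≤ Y i i) ∧
    (∀ i, -(Y i (Sum.inl 0)) ≤ Y i i) ∧
    (∀ i, Y i i ≤ 1) := by
  have ht : (0:ℝ) < (m:ℝ) + 1 := by positivity
  subst hZ hW hY
  refine ⟨?_, ?_, ?_, ?_, ?_⟩
  · rw [Matrix.posDef_iff_dotProduct_mulVec]
    constructor
    · ext i j
      rcases i with i | i <;> rcases j with j | j <;>
        simp [Matrix.conjTranspose_apply, Matrix.fromBlocks, Matrix.one_apply, eq_comm]
    · intro x hx
      set a := x (Sum.inl 0) with ha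
      set S := ∑ j, x (Sum.inr j) with hS
      set Q := ∑ j, (x (Sum.inr j))^2 with hQ
      have hdot : dotProduct (star x) ((Matrix.fromBlocks (Matrix.of fun _ _ => (1 : ℝ))
        (Matrix.of fun _ _ => 1 / (m + 1 : ℝ))
        (Matrix.of fun _ _ => 1 / (m + 1 : ℝ))
        ((1 / (m + 1 : ℝ)) • 1) : Matrix (Fin 1 ⊕ Fin m) (Fin 1 ⊕ Fin m) ℝ) *ᵥ x)
          = a^2 + 2*a*S/((m:ℝ)+1) + Q/((m:ℝ)+1) := by
        simp [dotProduct, Matrix.mulVec, Matrix.fromBlocks, Fintype.sum_sum_type,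
          Matrix.one_apply, Finset.mul_sum, Finset.sum_ite_eq, Finset.sum_div,
          Finset.sum_add_distrib, mul_add, ← hS, ← hQ, ← ha, Fin.sum_univ_one]
        have e1 : ∑ j : Fin m, x (Sum.inr j) * (((m:ℝ) + 1)⁻¹ * a) = ((m:ℝ)+1)⁻¹ * a * S := by
          rw [hS, Finset.mul_sum]; exact Finset.sum_congr rfl fun _ _ => by ring
        have e2 : ∑ j : Fin m, a * (((m:ℝ) + 1)⁻¹ * x (Sum.inr j)) = ((m:ℝ)+1)⁻¹ * a * S := by
          rw [hS, Finset.mul_sum]; exact Finset.sum_congr rfl fun _ _ => by ring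
        have e3 : ∑ j : Fin m, x (Sum.inr j) * (((m:ℝ) + 1)⁻¹ * x (Sum.inr j))
            = ((m:ℝ)+1)⁻¹ * Q := by
          rw [hQ, Finset.mul_sum]; exact Finset.sum_congr rfl fun _ _ => by ring
        rw [e1, e2, e3]
        field_simp
        ring
      rw [hdot]
      have hCS : S^2 ≤ (m:ℝ) * Q := by
        simpa [hS, hQ] using sq_sum_le_card_mul_sum_sq (s := Finset.univ)
          (f := fun j => x (Sum.inr j))
      have hQ0 : 0 ≤ Q := Finset.sum_nonneg fun j _ => sq_nonneg _
      rcases eq_or_ne Q 0 with h0 | h0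
      · have hw : ∀ j, x (Sum.inr j) = 0 := by
          intro j
          have := (Finset.sum_eq_zero_iff_of_nonneg
            (fun i _ => sq_nonneg (x (Sum.inr i)))).mp (hQ.symm.trans h0) j (Finset.mem_univ j)
          exact pow_eq_zero_iff (n := 2) (by norm_num) |>.mp this
        have hS0 : S = 0 := by simp [hS, hw]
        have haz : a ≠ 0 := by
          intro h
          apply hx
          funext i
          rcases i with i | i
          · have : i = 0 := Subsingleton.elim _ _
            simpa [this, ha] using h
          · exact hw i
        rw [hS0, h0]
        simpa using pow_pos (abs_pos.mpr haz) 2 |>.trans_le (by rw [sq_abs])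
      · have hQpos : 0 < Q := lt_of_le_of_ne hQ0 (Ne.symm h0)
        have key : ((m:ℝ)+1)^2 * (a^2 + 2*a*S/((m:ℝ)+1) + Q/((m:ℝ)+1))
            = (((m:ℝ)+1)*a + S)^2 + ((m:ℝ)*Q - S^2) + Q := by
          field_simp
          ring
        nlinarith [sq_nonneg (((m:ℝ)+1)*a + S), sq_nonneg ((m:ℝ)+1)]
  · simp [Matrix.mul_apply, Fintype.sum_sum_type, Matrix.fromBlocks, Matrix.one_apply]
  · intro i
    rcases i with i | i | j <;>
      simp [Matrix.mul_apply, Fintype.sum_sum_type, Matrix.fromBlocks, Matrix.one_apply,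
        Finset.mul_sum, Finset.sum_ite_eq, apply_ite, div_eq_mul_inv, Finset.sum_div] <;>
      positivity
  · intro i
    rcases i with i | i | j <;>
      simp [Matrix.mul_apply, Fintype.sum_sum_type, Matrix.fromBlocks, Matrix.one_apply,
        Finset.mul_sum, Finset.sum_ite_eq, apply_ite, div_eq_mul_inv, Finset.sum_div] <;>
      positivity
  · intro i
    rcases i with i | i | j <;>
      simp [Matrix.mul_apply, Fintype.sum_sum_type, Matrix.fromBlocks, Matrix.one_apply,
        Finset.mul_sum, Finset.sum_ite_eq, apply_ite, div_eq_mul_inv, Finset.sum_div] <;>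
      nlinarith [mul_inv_cancel₀ ht.ne', inv_nonneg.mpr ht.le]
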